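/- Let n ≥ 3, m ∈ ℕ, points x̄_1,…,x̄_m ∈ ℝ^n, and negative reals β_1,…,β_m with β := Σ_j β_j satisfying β + n - 2 > 0. Define W(x) = Π_{j=1}^m |x - x̄_j|^{β_j}. Then at every x distinct from all x̄_j, ΔW(x) ≤ (β + n - 2) Σ_{h=1}^m β_h Π_{i=1}^m |x - x̄_i|^{β_i - 2δ_{hi}}, and this bound is strictly negative (δ is the Kronecker delta). -/

import Mathlib

open Real Finset

noncomputable section
variable {n : ℕ}
local notation "E" => EuclideanSpace ℝ (Fin n)

def Wfun (m : ℕ) (c : Fin m → E) (β : Fin m → ℝ) : E → ℝ :=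
  fun y => ∏ j, (inner ℝ (y - c j) (y - c j) : ℝ) ^ (β j / 2)

def Sfun (m : ℕ) (c : Fin m → E) (β : Fin m → ℝ) (i : Fin n) : E → ℝ :=
  fun y => ∑ j, β j * ((y - c j) i) * (inner ℝ (y - c j) (y - c j) : ℝ)⁻¹

lemma hasFDerivAt_phi (c y : E) :
    HasFDerivAt (fun z : E => (inner ℝ (z - c) (z - c) : ℝ))
      ((2:ℝ) • (innerSL ℝ (y - c))) y := by
  have h := ((hasFDerivAt_id y).sub_const c).inner ℝ ((hasFDerivAt_id y).sub_const c)
  refine h.congr_fderiv (Eq.symm ?_)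
  ext v
  simp [fderivInnerCLM_apply, real_inner_comm, mul_sub, sub_mul, Finset.sum_sub_distrib,
    mul_comm]
  rw [inner_sub_right, real_inner_comm v y, real_inner_comm v c]; ring

lemma hasFDerivAt_psi (c : E) (p : ℝ) (y : E) (hy : y ≠ c) :
    HasFDerivAt (fun z : E => (inner ℝ (z - c) (z - c) : ℝ) ^ p)
      ((2 * p * (inner ℝ (y - c) (y - c) : ℝ) ^ (p - 1)) • innerSL ℝ (y - c)) y := by
  have hpos : (0:ℝ) < (inner ℝ (y - c) (y - c) : ℝ) := by
    rw [real_inner_self_eq_norm_sq]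
    exact pow_pos (norm_pos_iff.mpr (sub_ne_zero.mpr hy)) 2
  have h1 : HasDerivAt (fun t : ℝ => t ^ p)
      (p * (inner ℝ (y - c) (y - c) : ℝ) ^ (p - 1)) ((inner ℝ (y - c) (y - c) : ℝ)) :=
    Real.hasDerivAt_rpow_const (Or.inl (ne_of_gt hpos))
  have h2 := h1.comp_hasFDerivAt y (hasFDerivAt_phi c y)
  refine h2.congr_fderiv (Eq.symm ?_)
  ext v
  simp
  ring

lemma hasFDerivAt_W (m : ℕ) (c : Fin m → E) (β : Fin m → ℝ) (y : E) (hy : ∀ j, y ≠ c j) :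
    HasFDerivAt (Wfun m c β)
      ((Wfun m c β y) •
        (∑ j, (β j * (inner ℝ (y - c j) (y - c j) : ℝ)⁻¹) • innerSL ℝ (y - c j))) y := by
  have h := HasFDerivAt.finset_prod (u := Finset.univ)
    (g := fun j (z : E) => (inner ℝ (z - c j) (z - c j) : ℝ) ^ (β j / 2))
    (g' := fun j => (2 * (β j / 2) * (inner ℝ (y - c j) (y - c j) : ℝ) ^ (β j / 2 - 1)) •
        innerSL ℝ (y - c j))
    (fun j _ => hasFDerivAt_psi (c j) (β j / 2) y (hy j))
  refine h.congr_fderiv (Eq.symm ?_)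
  ext v
  simp only [ContinuousLinearMap.smul_apply, ContinuousLinearMap.coe_sum', Finset.sum_apply,
    smul_eq_mul, Finset.mul_sum, Wfun]
  refine Finset.sum_congr rfl fun j _ => ?_
  have hpos : (0:ℝ) < (inner ℝ (y - c j) (y - c j) : ℝ) := by
    rw [real_inner_self_eq_norm_sq]
    exact pow_pos (norm_pos_iff.mpr (sub_ne_zero.mpr (hy j))) 2
  have hsub : (inner ℝ (y - c j) (y - c j) : ℝ) ^ (β j / 2 - 1)
      = (inner ℝ (y - c j) (y - c j) : ℝ) ^ (β j / 2) * (inner ℝ (y - c j) (y - c j) : ℝ)⁻¹ := by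
    rw [Real.rpow_sub hpos, Real.rpow_one, div_eq_mul_inv]
  have hprod : (∏ k ∈ Finset.univ.erase j, (inner ℝ (y - c k) (y - c k) : ℝ) ^ (β k / 2)) *
      (inner ℝ (y - c j) (y - c j) : ℝ) ^ (β j / 2)
      = ∏ k, (inner ℝ (y - c k) (y - c k) : ℝ) ^ (β k / 2) :=
    Finset.prod_erase_mul _ _ (Finset.mem_univ j)
  rw [hsub, ← hprod]
  ring

lemma fderiv_W_eq (m : ℕ) (c : Fin m → E) (β : Fin m → ℝ) (y : E) (hy : ∀ j, y ≠ c j)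
    (i : Fin n) :
    fderiv ℝ (Wfun m c β) y (EuclideanSpace.single i 1) = Wfun m c β y * Sfun m c β i y := by
  rw [(hasFDerivAt_W m c β y hy).fderiv]
  simp only [ContinuousLinearMap.smul_apply, ContinuousLinearMap.coe_sum', Finset.sum_apply,
    smul_eq_mul, Sfun, innerSL_apply_apply, Finset.mul_sum]
  refine Finset.sum_congr rfl fun j _ => ?_
  have : (inner ℝ (y - c j) (EuclideanSpace.single i (1:ℝ)) : ℝ) = (y - c j) i := by
    simp [EuclideanSpace.inner_single_right]
  rw [this]; ring

lemma hasFDerivAt_S (m : ℕ) (c : Fin m → E) (β : Fin m → ℝ) (i : Fin n) (x : E)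
    (hx : ∀ j, x ≠ c j) :
    HasFDerivAt (Sfun m c β i)
      (∑ j, ((β j * ((x - c j) i)) •
          (-((inner ℝ (x - c j) (x - c j) : ℝ) ^ 2)⁻¹ • ((2:ℝ) • innerSL ℝ (x - c j)))
        + ((inner ℝ (x - c j) (x - c j) : ℝ)⁻¹) •
            (β j • (EuclideanSpace.proj i : EuclideanSpace ℝ (Fin n) →L[ℝ] ℝ)))) x := by
  apply HasFDerivAt.fun_sum
  intro j _
  have hpos : (0:ℝ) < (inner ℝ (x - c j) (x - c j) : ℝ) := by
    rw [real_inner_self_eq_norm_sq]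
    exact pow_pos (norm_pos_iff.mpr (sub_ne_zero.mpr (hx j))) 2
  have h1 : HasFDerivAt (fun z : E => β j * ((z - c j) i))
      (β j • (EuclideanSpace.proj i : EuclideanSpace ℝ (Fin n) →L[ℝ] ℝ)) x :=
    (((EuclideanSpace.proj i : EuclideanSpace ℝ (Fin n) →L[ℝ] ℝ).hasFDerivAt).sub_const
      ((c j) i)).const_mul (β j)
  have h2 : HasFDerivAt (fun z : E => (inner ℝ (z - c j) (z - c j) : ℝ)⁻¹)
      (-((inner ℝ (x - c j) (x - c j) : ℝ) ^ 2)⁻¹ • ((2:ℝ) • innerSL ℝ (x - c j))) x :=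
    (hasDerivAt_inv (ne_of_gt hpos)).comp_hasFDerivAt x (hasFDerivAt_phi (c j) x)
  exact h1.mul h2

lemma secondDeriv (m : ℕ) (c : Fin m → E) (β : Fin m → ℝ) (x : E) (hx : ∀ j, x ≠ c j)
    (i : Fin n) :
    fderiv ℝ (fun y => fderiv ℝ (Wfun m c β) y (EuclideanSpace.single i 1)) x
        (EuclideanSpace.single i 1)
      = Wfun m c β x * (Sfun m c β i x * Sfun m c β i x)
        + Wfun m c β x * ∑ j, (β j * (inner ℝ (x - c j) (x - c j) : ℝ)⁻¹
            - 2 * β j * ((x - c j) i)^2 * (((inner ℝ (x - c j) (x - c j) : ℝ))^2)⁻¹) := by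
  have hUopen : IsOpen {y : E | ∀ j, y ≠ c j} := by
    have h : {y : E | ∀ j, y ≠ c j} = ⋂ j, {c j}ᶜ := by
      ext y; simp [Set.mem_iInter]
    rw [h]; exact isOpen_iInter_of_finite fun j => isOpen_compl_singleton
  have hU : {y : E | ∀ j, y ≠ c j} ∈ nhds x := hUopen.mem_nhds hx
  have hev : (fun y => fderiv ℝ (Wfun m c β) y (EuclideanSpace.single i 1))
      =ᶠ[nhds x] fun y => Wfun m c β y * Sfun m c β i y :=
    Filter.eventuallyEq_of_mem hU (fun y hy => fderiv_W_eq m c β y hy i)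
  rw [hev.fderiv_eq]
  rw [((hasFDerivAt_W m c β x hx).fun_mul (hasFDerivAt_S m c β i x hx)).fderiv]
  simp only [ContinuousLinearMap.add_apply, ContinuousLinearMap.smul_apply,
    ContinuousLinearMap.coe_sum', Finset.sum_apply, smul_eq_mul, innerSL_apply_apply,
    ContinuousLinearMap.coe_smul', Pi.smul_apply, ContinuousLinearMap.neg_apply]
  have hinner : ∀ j : Fin m,
      (inner ℝ (x - c j) (EuclideanSpace.single i (1:ℝ)) : ℝ) = (x - c j) i := by
    intro j; simp [EuclideanSpace.inner_single_right]
  have hproj : (EuclideanSpace.proj i : EuclideanSpace ℝ (Fin n) →L[ℝ] ℝ)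
      (EuclideanSpace.single i 1) = 1 := by
    simp [EuclideanSpace.single_apply]
  simp only [hinner, hproj, mul_one]
  have h1 : (∑ j, β j * (inner ℝ (x - c j) (x - c j) : ℝ)⁻¹ * ((x - c j) i))
      = Sfun m c β i x := by
    refine Finset.sum_congr rfl fun j _ => ?_
    simp [Sfun]; ring
  have h2 : (∑ j, (β j * ((x - c j) i) *
        (-((inner ℝ (x - c j) (x - c j) : ℝ) ^ 2)⁻¹ * (2 * ((x - c j) i))) +
        (inner ℝ (x - c j) (x - c j) : ℝ)⁻¹ * β j))
      = ∑ j, (β j * (inner ℝ (x - c j) (x - c j) : ℝ)⁻¹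
          - 2 * β j * ((x - c j) i)^2 * (((inner ℝ (x - c j) (x - c j) : ℝ))^2)⁻¹) := by
    refine Finset.sum_congr rfl fun j _ => ?_
    ring
  rw [h1, h2]
  ring

lemma sum_sq_coords (u : E) : ∑ i, (u i)^2 = (inner ℝ u u : ℝ) := by
  rw [PiLp.inner_apply]
  simp [RCLike.inner_apply, sq]

lemma Q_bound (m : ℕ) (c : Fin m → E) (β : Fin m → ℝ) (x : E) (hx : ∀ j, x ≠ c j)
    (hβ : ∀ j, β j < 0) :
    ∑ i, Sfun m c β i x * Sfun m c β i x
      ≤ (∑ j, β j) * ∑ j, β j * (inner ℝ (x - c j) (x - c j) : ℝ)⁻¹ := by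
  have hr : ∀ j, (0:ℝ) < ‖x - c j‖ := fun j => norm_pos_iff.mpr (sub_ne_zero.mpr (hx j))
  have hP : ∀ j, (0:ℝ) < (inner ℝ (x - c j) (x - c j) : ℝ) := by
    intro j; rw [real_inner_self_eq_norm_sq]; exact pow_pos (hr j) 2
  set u : E := ∑ j, (β j * (inner ℝ (x - c j) (x - c j) : ℝ)⁻¹) • (x - c j) with hu
  have hui : ∀ i, u i = Sfun m c β i x := by
    intro i
    rw [hu]
    rw [WithLp.ofLp_sum, Finset.sum_apply i Finset.univ
      (fun j => (β j * (inner ℝ (x - c j) (x - c j) : ℝ)⁻¹) • (x - c j))]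
    refine Finset.sum_congr rfl fun j _ => ?_
    simp only [PiLp.smul_apply, smul_eq_mul, Sfun]
    ring
  have hQ1 : ∑ i, Sfun m c β i x * Sfun m c β i x = ‖u‖^2 := by
    rw [← real_inner_self_eq_norm_sq, ← sum_sq_coords]
    refine Finset.sum_congr rfl fun i _ => ?_
    rw [hui i, sq]
  have hnu : ‖u‖ ≤ ∑ j, (-β j) * ‖x - c j‖⁻¹ := by
    refine (norm_sum_le _ _).trans (le_of_eq (Finset.sum_congr rfl fun j _ => ?_))
    rw [norm_smul]
    have h1 : ‖β j * (inner ℝ (x - c j) (x - c j) : ℝ)⁻¹‖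
        = (-β j) * (inner ℝ (x - c j) (x - c j) : ℝ)⁻¹ := by
      rw [Real.norm_eq_abs, abs_mul, abs_of_neg (hβ j), abs_of_pos (inv_pos.mpr (hP j))]
    rw [h1, real_inner_self_eq_norm_sq]
    have h2 : ((‖x - c j‖^2)⁻¹ : ℝ) * ‖x - c j‖ = ‖x - c j‖⁻¹ := by
      field_simp
    rw [mul_assoc, h2]
  have hCS : (∑ j, (-β j) * ‖x - c j‖⁻¹)^2
      ≤ (∑ j, -β j) * ∑ j, (-β j) * (inner ℝ (x - c j) (x - c j) : ℝ)⁻¹ := by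
    have h := Finset.sum_mul_sq_le_sq_mul_sq Finset.univ (fun j => Real.sqrt (-β j))
      (fun j => Real.sqrt (-β j) * ‖x - c j‖⁻¹)
    have e1 : ∀ j : Fin m, Real.sqrt (-β j) * (Real.sqrt (-β j) * ‖x - c j‖⁻¹)
        = (-β j) * ‖x - c j‖⁻¹ := by
      intro j
      rw [← mul_assoc, Real.mul_self_sqrt (by linarith [hβ j])]
    have e2 : ∀ j : Fin m, Real.sqrt (-β j) ^ 2 = -β j := fun j =>
      Real.sq_sqrt (by linarith [hβ j])
    have e3 : ∀ j : Fin m, (Real.sqrt (-β j) * ‖x - c j‖⁻¹) ^ 2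
        = (-β j) * (inner ℝ (x - c j) (x - c j) : ℝ)⁻¹ := by
      intro j
      rw [mul_pow, e2 j, real_inner_self_eq_norm_sq, ← inv_pow]
    calc (∑ j, (-β j) * ‖x - c j‖⁻¹)^2
        = (∑ j, Real.sqrt (-β j) * (Real.sqrt (-β j) * ‖x - c j‖⁻¹))^2 := by
          rw [Finset.sum_congr rfl fun j _ => (e1 j).symm]
      _ ≤ (∑ j, Real.sqrt (-β j) ^ 2) * ∑ j, (Real.sqrt (-β j) * ‖x - c j‖⁻¹)^2 := h
      _ = (∑ j, -β j) * ∑ j, (-β j) * (inner ℝ (x - c j) (x - c j) : ℝ)⁻¹ := by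
          rw [Finset.sum_congr rfl fun j _ => e2 j, Finset.sum_congr rfl fun j _ => e3 j]
  have hfin : (∑ j, -β j) * (∑ j, (-β j) * (inner ℝ (x - c j) (x - c j) : ℝ)⁻¹)
      = (∑ j, β j) * ∑ j, β j * (inner ℝ (x - c j) (x - c j) : ℝ)⁻¹ := by
    rw [Finset.sum_neg_distrib]
    rw [Finset.sum_congr rfl (fun j _ => neg_mul (β j) _), Finset.sum_neg_distrib,
      neg_mul_neg]
  rw [hQ1, ← hfin]
  exact le_trans (pow_le_pow_left₀ (norm_nonneg u) hnu 2) hCS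

end

noncomputable def laplacian {n : ℕ} (f : EuclideanSpace ℝ (Fin n) → ℝ)
    (x : EuclideanSpace ℝ (Fin n)) : ℝ :=
  ∑ i : Fin n, fderiv ℝ (fun y => fderiv ℝ f y (EuclideanSpace.single i 1)) x
    (EuclideanSpace.single i 1)

theorem stmt3 (n m : ℕ) (hn : 3 ≤ n) (hm : 0 < m)
    (xbar : Fin m → EuclideanSpace ℝ (Fin n)) (β : Fin m → ℝ)
    (hβ : ∀ j, β j < 0) (hsum : (∑ j, β j) + n - 2 > 0)
    (x : EuclideanSpace ℝ (Fin n)) (hx : ∀ j, x ≠ xbar j) :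
    laplacian (fun y => ∏ j, ‖y - xbar j‖ ^ β j) x ≤
        ((∑ j, β j) + n - 2) *
          ∑ h, β h * ∏ i, ‖x - xbar i‖ ^ (β i - 2 * (if h = i then 1 else 0)) ∧
      ((∑ j, β j) + n - 2) *
          ∑ h, β h * ∏ i, ‖x - xbar i‖ ^ (β i - 2 * (if h = i then 1 else 0)) < 0 := by
  classical
  have hβ0 : ∀ j, β j ≠ 0 := fun j => ne_of_lt (hβ j)
  have hr : ∀ j, (0:ℝ) < ‖x - xbar j‖ := fun j => norm_pos_iff.mpr (sub_ne_zero.mpr (hx j))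
  have hP : ∀ j, (0:ℝ) < (inner ℝ (x - xbar j) (x - xbar j) : ℝ) := by
    intro j; rw [real_inner_self_eq_norm_sq]; exact pow_pos (hr j) 2
  -- identify the statement's function with Wfun
  have hWeq : (fun y : EuclideanSpace ℝ (Fin n) => ∏ j, ‖y - xbar j‖ ^ β j)
      = Wfun m xbar β := by
    funext y
    simp only [Wfun]
    refine Finset.prod_congr rfl fun j _ => ?_
    rw [real_inner_self_eq_norm_sq, ← Real.rpow_natCast ‖y - xbar j‖ 2,
      ← Real.rpow_mul (norm_nonneg _)]
    congr 1
    push_cast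
    ring
  have hWpos : 0 < Wfun m xbar β x :=
    Finset.prod_pos fun j _ => Real.rpow_pos_of_pos (hP j) _
  set W0 : ℝ := Wfun m xbar β x with hW0
  set S0 : ℝ := ∑ j, β j * (inner ℝ (x - xbar j) (x - xbar j) : ℝ)⁻¹ with hS0
  have hS0neg : S0 < 0 := by
    have : Nonempty (Fin m) := ⟨⟨0, hm⟩⟩
    exact Finset.sum_neg
      (fun j _ => mul_neg_of_neg_of_pos (hβ j) (inv_pos.mpr (hP j))) Finset.univ_nonempty
  -- the RHS sum equals W0 * S0
  have hRHS : (∑ h, β h * ∏ i, ‖x - xbar i‖ ^ (β i - 2 * (if h = i then 1 else 0)))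
      = W0 * S0 := by
    have hterm : ∀ h : Fin m, (∏ i, ‖x - xbar i‖ ^ (β i - 2 * (if h = i then 1 else 0)))
        = W0 * (inner ℝ (x - xbar h) (x - xbar h) : ℝ)⁻¹ := by
      intro h
      have h1 : (∏ i, ‖x - xbar i‖ ^ (β i - 2 * (if h = i then 1 else 0)))
          = (∏ i ∈ Finset.univ.erase h,
              ‖x - xbar i‖ ^ (β i - 2 * (if h = i then 1 else 0))) *
            ‖x - xbar h‖ ^ (β h - 2 * (if h = h then (1:ℝ) else 0)) :=
        (Finset.prod_erase_mul _ _ (Finset.mem_univ h)).symm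
      rw [h1]
      have h2 : (∏ i ∈ Finset.univ.erase h,
          ‖x - xbar i‖ ^ (β i - 2 * (if h = i then 1 else 0)))
          = ∏ i ∈ Finset.univ.erase h, ‖x - xbar i‖ ^ (β i) := by
        refine Finset.prod_congr rfl fun i hi => ?_
        have : h ≠ i := fun e => (Finset.mem_erase.mp hi).1 e.symm
        rw [if_neg this]
        norm_num
      have h3 : ‖x - xbar h‖ ^ (β h - 2 * (if h = h then (1:ℝ) else 0))
          = ‖x - xbar h‖ ^ (β h) * (inner ℝ (x - xbar h) (x - xbar h) : ℝ)⁻¹ := by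
        rw [if_pos rfl, mul_one, Real.rpow_sub (hr h), div_eq_mul_inv]
        congr 1
        rw [real_inner_self_eq_norm_sq, ← Real.rpow_natCast ‖x - xbar h‖ 2]
        norm_num
      rw [h2, h3, ← mul_assoc, Finset.prod_erase_mul _ _ (Finset.mem_univ h), hW0, ← hWeq]
    rw [Finset.sum_congr rfl fun h _ => by rw [hterm h]]
    rw [hS0, Finset.mul_sum]
    exact Finset.sum_congr rfl fun h _ => by ring
  -- compute the laplacian
  have hlap : laplacian (fun y => ∏ j, ‖y - xbar j‖ ^ β j) x
      = W0 * (∑ i, Sfun m xbar β i x * Sfun m xbar β i x) + W0 * (((n:ℝ) - 2) * S0) := by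
    rw [laplacian, hWeq]
    rw [Finset.sum_congr rfl fun i _ => secondDeriv m xbar β x hx i]
    rw [Finset.sum_add_distrib, ← Finset.mul_sum, ← Finset.mul_sum]
    congr 1
    congr 1
    rw [Finset.sum_comm]
    have hAj : ∀ j : Fin m, ∑ i, ((x - xbar j) i)^2
        = (inner ℝ (x - xbar j) (x - xbar j) : ℝ) := fun j => sum_sq_coords _
    have : ∀ j : Fin m, (∑ i : Fin n, (β j * (inner ℝ (x - xbar j) (x - xbar j) : ℝ)⁻¹
        - 2 * β j * ((x - xbar j) i)^2 * (((inner ℝ (x - xbar j) (x - xbar j) : ℝ))^2)⁻¹))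
        = ((n:ℝ) - 2) * (β j * (inner ℝ (x - xbar j) (x - xbar j) : ℝ)⁻¹) := by
      intro j
      rw [Finset.sum_sub_distrib, Finset.sum_const, Finset.card_univ, Fintype.card_fin]
      have : (∑ i : Fin n, 2 * β j * ((x - xbar j) i)^2 *
          (((inner ℝ (x - xbar j) (x - xbar j) : ℝ))^2)⁻¹)
          = 2 * β j * (inner ℝ (x - xbar j) (x - xbar j) : ℝ) *
            (((inner ℝ (x - xbar j) (x - xbar j) : ℝ))^2)⁻¹ := by
        rw [← hAj j, Finset.mul_sum, Finset.sum_mul]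
      rw [this, nsmul_eq_mul]
      have hPne := ne_of_gt (hP j)
      have hPP : (inner ℝ (x - xbar j) (x - xbar j) : ℝ) *
          (((inner ℝ (x - xbar j) (x - xbar j) : ℝ))^2)⁻¹
          = (inner ℝ (x - xbar j) (x - xbar j) : ℝ)⁻¹ := by
        rw [sq, mul_inv, ← mul_assoc, mul_inv_cancel₀ hPne, one_mul]
      linear_combination (-2 * β j) * hPP
    rw [Finset.sum_congr rfl fun j _ => this j, ← Finset.mul_sum, hS0]
  -- main bound
  have hQ := Q_bound m xbar β x hx hβ
  have hmain : laplacian (fun y => ∏ j, ‖y - xbar j‖ ^ β j) x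
      ≤ ((∑ j, β j) + n - 2) * (W0 * S0) := by
    rw [hlap]
    have h1 : W0 * (∑ i, Sfun m xbar β i x * Sfun m xbar β i x)
        ≤ W0 * ((∑ j, β j) * S0) := by
      apply mul_le_mul_of_nonneg_left _ (le_of_lt hWpos)
      rw [hS0]
      exact hQ
    calc W0 * (∑ i, Sfun m xbar β i x * Sfun m xbar β i x) + W0 * (((n:ℝ) - 2) * S0)
        ≤ W0 * ((∑ j, β j) * S0) + W0 * (((n:ℝ) - 2) * S0) := by linarith
      _ = ((∑ j, β j) + n - 2) * (W0 * S0) := by ring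
  constructor
  · rw [hRHS]; exact hmain
  · rw [hRHS]
    exact mul_neg_of_pos_of_neg hsum (mul_neg_of_pos_of_neg hWpos hS0neg)
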